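/- arXiv:2509.01191 — 6 statements merged into one kernel-verified Lean document; each statement's English description precedes it below -/
import Mathlib

section
/- Let Q be a root closed (in particular cancellative) commutative monoid and let F be a face of Q. Then the localization Q_F of Q at F is root closed. -/
/-- Let `Q` be a root closed (in particular cancellative) commutative monoid and `F` a face
of `Q`. Then the localization of `Q` at `F` is root closed: whenever `a ^ n = b ^ n * q`
for some `n > 0` and some `q`, there exists `q'` with `a = b * q'`. -/
theorem rootClosed_of_localization_at_face (Q : Type*) [CommMonoid Q] [IsCancelMul Q]
    (hrc : ∀ (a b : Q) (n : ℕ), 0 < n → (∃ q : Q, a ^ n = b ^ n * q) → ∃ q' : Q, a = b * q')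
    (F : Submonoid Q) (hface : ∀ x y : Q, x * y ∈ F → x ∈ F ∧ y ∈ F) :
    ∀ (a b : Localization F) (n : ℕ), 0 < n →
      (∃ q : Localization F, a ^ n = b ^ n * q) → ∃ q' : Localization F, a = b * q' := by
  intro a b n hn hq
  obtain ⟨q, hq⟩ := hq
  induction a using Localization.induction_on with
  | H p =>
  obtain ⟨x, s⟩ := p
  induction b using Localization.induction_on with
  | H p =>
  obtain ⟨y, t⟩ := p
  induction q using Localization.induction_on with
  | H p =>
  obtain ⟨z, u⟩ := p
  obtain ⟨m, rfl⟩ := Nat.exists_eq_succ_of_ne_zero hn.ne'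
  simp only [Localization.mk_pow, Localization.mk_mul] at hq
  rw [Localization.mk_eq_mk_iff, Localization.r_iff_exists] at hq
  obtain ⟨c, hc⟩ := hq
  -- key equation in Q
  have key : (x * t * (c * u)) ^ (m + 1)
      = (y * s) ^ (m + 1) * (z * c * (c * u) ^ m) := by
    have h1 : x ^ (m+1) * (t ^ (m+1) * (c * u))
        = y ^ (m+1) * z * (s ^ (m+1) * c) := by
      push_cast at hc
      calc x ^ (m+1) * (t ^ (m+1) * (c * u))
          = (c : Q) * ((t:Q)^(m+1) * (u:Q) * x^(m+1)) := by
            push_cast; simp [mul_pow, pow_succ, mul_comm, mul_assoc, mul_left_comm]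
        _ = (c : Q) * ((s:Q)^(m+1) * (y^(m+1) * z)) := by rw [hc]
        _ = y ^ (m+1) * z * (s ^ (m+1) * c) := by push_cast; simp [mul_pow, pow_succ, mul_comm, mul_assoc, mul_left_comm]
    calc (x * t * (c * u)) ^ (m + 1)
        = (x ^ (m+1) * (t ^ (m+1) * (c * u))) * ((c:Q) * u) ^ m := by push_cast; simp [mul_pow, pow_succ, mul_comm, mul_assoc, mul_left_comm]
      _ = (y ^ (m+1) * z * (s ^ (m+1) * c)) * ((c:Q) * u) ^ m := by rw [h1]
      _ = (y * s) ^ (m + 1) * (z * c * (c * u) ^ m) := by push_cast; simp [mul_pow, pow_succ, mul_comm, mul_assoc, mul_left_comm]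
  obtain ⟨w, hw⟩ := hrc (x * t * (c * u)) (y * s) (m + 1) (Nat.succ_pos m) ⟨_, key⟩
  -- hw : x * t * (c*u) = y * s * w
  have hcu : (c : Q) * u ∈ F := F.mul_mem c.2 u.2
  refine ⟨Localization.mk w ⟨(c : Q) * u, hcu⟩, ?_⟩
  rw [Localization.mk_mul, Localization.mk_eq_mk_iff, Localization.r_iff_exists]
  refine ⟨1, ?_⟩
  push_cast
  calc 1 * ((t : Q) * ((c:Q) * u) * x) = 1 * (x * t * ((c:Q)*u)) := by simp [mul_pow, pow_succ, mul_comm, mul_assoc, mul_left_comm]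
    _ = 1 * ((s:Q) * (y * w)) := by rw [hw]; simp [mul_pow, pow_succ, mul_comm, mul_assoc, mul_left_comm]
end

section
/- Let A be a commutative ring, let Q be a commutative monoid, and let F be a face of Q with corresponding prime ideal p = Q∖F. Let I be the ideal of the monoid algebra A[Q] generated by the elements e^q with q ∈ Q∖F. Then the composite ring homomorphism A[F] → A[Q] → A[Q]/I (the inclusion of monoid algebras followed by the quotient map) is bijective, i.e., A[F] ≅ A[Q]/I as rings. -/
/-- Let `A` be a commutative ring, `Q` a commutative monoid, `F` a face of `Q`, and `I` the ideal
of the monoid algebra `A[Q]` generated by the elements `e^q` with `q ∉ F`. Then the composite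
ring homomorphism `A[F] → A[Q] → A[Q]/I` is bijective, i.e. `A[F] ≅ A[Q]/I`. -/
theorem monoidAlgebra_quotient_face_bijective (A : Type*) [CommRing A]
    (Q : Type*) [CommMonoid Q]
    (F : Submonoid Q) (hface : ∀ x y : Q, x * y ∈ F → x ∈ F ∧ y ∈ F)
    (I : Ideal (MonoidAlgebra A Q))
    (hI : I = Ideal.span ((fun q => MonoidAlgebra.of A Q q) '' {q : Q | q ∉ F})) :
    Function.Bijective
      ((Ideal.Quotient.mk I).comp (MonoidAlgebra.mapDomainRingHom A F.subtype)) := by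
  classical
  -- the multiplicative map `Q → A[F]` sending `q ↦ e^q` if `q ∈ F` and to `0` otherwise
  set fmon : Q →* MonoidAlgebra A F :=
    { toFun := fun q => if h : q ∈ F then MonoidAlgebra.of A F ⟨q, h⟩ else 0
      map_one' := by
        rw [dif_pos F.one_mem]
        rfl
      map_mul' := by
        intro x y
        by_cases hxy : x * y ∈ F
        · obtain ⟨hx, hy⟩ := hface x y hxy
          have h2 : (⟨x * y, hxy⟩ : F) = ⟨x, hx⟩ * ⟨y, hy⟩ := rfl
          rw [dif_pos hxy, dif_pos hx, dif_pos hy, h2, map_mul]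
        · have hnot : ¬ (x ∈ F ∧ y ∈ F) := fun ⟨hx, hy⟩ => hxy (mul_mem hx hy)
          by_cases hx : x ∈ F
          · have hy : y ∉ F := fun hy => hnot ⟨hx, hy⟩
            simp [hxy, hx, hy]
          · simp [hxy, hx] } with hfmon
  set π : MonoidAlgebra A Q →+* MonoidAlgebra A F :=
    (MonoidAlgebra.lift A (MonoidAlgebra A F) Q fmon).toRingHom with hπ
  have hπ_of : ∀ q : Q, π (MonoidAlgebra.of A Q q) = fmon q := by
    intro q; simp only [hπ, AlgHom.toRingHom_eq_coe, RingHom.coe_coe]; exact MonoidAlgebra.lift_of fmon q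
  have hker : ∀ a ∈ I, π a = 0 := by
    intro a ha
    rw [hI] at ha
    have hle : Ideal.span ((fun q => MonoidAlgebra.of A Q q) '' {q : Q | q ∉ F}) ≤
        RingHom.ker π := by
      rw [Ideal.span_le]
      rintro x ⟨q, hq, rfl⟩
      simp only [Set.mem_setOf_eq] at hq
      simp only [SetLike.mem_coe, RingHom.mem_ker, hπ_of]
      simp [hfmon, dif_neg hq]
    exact hle ha
  set ψ : MonoidAlgebra A Q ⧸ I →+* MonoidAlgebra A F :=
    Ideal.Quotient.lift I π hker with hψ
  set φ : MonoidAlgebra A F →+* MonoidAlgebra A Q ⧸ I :=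
    (Ideal.Quotient.mk I).comp (MonoidAlgebra.mapDomainRingHom A F.subtype) with hφ
  have hφ_single : ∀ (f : F) (a : A),
      φ (MonoidAlgebra.single f a) = Ideal.Quotient.mk I (MonoidAlgebra.single (f : Q) a) := by
    intro f a
    simp [hφ, MonoidAlgebra.mapDomainRingHom, Finsupp.mapDomain_single]
  have hπ_single_F : ∀ (f : F) (a : A),
      π (MonoidAlgebra.single (f : Q) a) = MonoidAlgebra.single f a := by
    intro f a
    have h1 : MonoidAlgebra.single ((f : Q)) a
        = a • MonoidAlgebra.of A Q (f : Q) := by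
      simp [MonoidAlgebra.of_apply, Finsupp.smul_single]
    rw [h1]
    have : π (a • MonoidAlgebra.of A Q (f : Q)) = a • π (MonoidAlgebra.of A Q (f : Q)) := by
      simp [hπ]
    rw [this, hπ_of]
    simp [hfmon, f.2, MonoidAlgebra.of_apply, Finsupp.smul_single]
  have left : ∀ x, ψ (φ x) = x := by
    have : ψ.comp φ = RingHom.id _ := by
      apply MonoidAlgebra.ringHom_ext
      · intro a
        simp only [RingHom.comp_apply, RingHom.id_apply]
        rw [hφ_single, hψ, Ideal.Quotient.lift_mk, hπ_single_F]
      · intro f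
        simp only [RingHom.comp_apply, RingHom.id_apply, MonoidAlgebra.of_apply]
        rw [hφ_single, hψ, Ideal.Quotient.lift_mk, hπ_single_F]
    intro x; exact RingHom.congr_fun this x
  have right : ∀ y, φ (ψ y) = y := by
    have : φ.comp ψ = RingHom.id _ := by
      apply Ideal.Quotient.ringHom_ext
      apply MonoidAlgebra.ringHom_ext
      · intro a
        simp only [RingHom.comp_apply, RingHom.id_apply]
        rw [hψ, Ideal.Quotient.lift_mk]
        have : (MonoidAlgebra.single (1 : Q) a) = MonoidAlgebra.single ((1 : F) : Q) a := by simp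
        rw [this, hπ_single_F, hφ_single]
      · intro q
        simp only [RingHom.comp_apply, RingHom.id_apply, MonoidAlgebra.of_apply]
        rw [hψ, Ideal.Quotient.lift_mk]
        by_cases hq : q ∈ F
        · have : (MonoidAlgebra.single q (1 : A)) = MonoidAlgebra.single ((⟨q, hq⟩ : F) : Q) 1 := rfl
          rw [this, hπ_single_F, hφ_single]
        · have h0 : π (MonoidAlgebra.single q (1 : A)) = 0 := by
            have := hπ_of q
            simpa [hfmon, hq, MonoidAlgebra.of_apply] using this
          rw [h0, map_zero]
          symm
          rw [Ideal.Quotient.eq_zero_iff_mem, hI]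
          exact Ideal.subset_span ⟨q, hq, rfl⟩
    intro y; exact RingHom.congr_fun this y
  exact ⟨Function.LeftInverse.injective left, fun y => ⟨ψ y, right y⟩⟩
end

section
/- Let A be an integral domain and let Q be a cancellative, torsion-free commutative monoid. Let F be a face of Q. Then the ideal I of the monoid algebra A[Q] generated by the elements e^q with q ∈ Q∖F is a prime ideal of A[Q]. -/
section Grothendieck

variable (Q : Type*) [CommMonoid Q] [IsCancelMul Q]

/-- The setoid for the Grothendieck group of a cancellative commutative monoid. -/
def grSetoid : Setoid (Q × Q) where
  r x y := x.1 * y.2 = y.1 * x.2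
  iseqv := by
    refine ⟨fun _ => rfl, fun h => h.symm, ?_⟩
    rintro ⟨a, b⟩ ⟨c, d⟩ ⟨e, f⟩ h1 h2
    dsimp only at *
    apply mul_right_cancel (b := d)
    calc a * f * d = (a * d) * f := by rw [mul_assoc, mul_comm f d, mul_assoc]
    _ = (c * b) * f := by rw [h1]
    _ = (c * f) * b := by rw [mul_assoc, mul_comm b f, mul_assoc]
    _ = (e * d) * b := by rw [h2]
    _ = e * b * d := by rw [mul_assoc, mul_comm d b, mul_assoc]

/-- The Grothendieck group of a cancellative commutative monoid. -/
def Gr := Quotient (grSetoid Q)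

variable {Q}

/-- mk for Gr -/
def Gr.mk (a b : Q) : Gr Q := Quotient.mk (grSetoid Q) (a, b)

lemma Gr.mk_eq_mk {a b c d : Q} : Gr.mk a b = Gr.mk c d ↔ a * d = c * b :=
  ⟨fun h => Quotient.exact h, fun h => Quotient.sound h⟩

instance : CommGroup (Gr Q) where
  mul := Quotient.map₂ (fun x y => (x.1 * y.1, x.2 * y.2)) (by
    rintro ⟨a, b⟩ ⟨c, d⟩ h1 ⟨e, f⟩ ⟨g, k⟩ h2
    change a * d = c * b at h1
    change e * k = g * f at h2
    change a * e * (d * k) = c * g * (b * f)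
    rw [mul_mul_mul_comm, h1, h2, mul_mul_mul_comm])
  one := Gr.mk 1 1
  inv := Quotient.map (fun x => (x.2, x.1)) (by
    rintro ⟨a, b⟩ ⟨c, d⟩ h
    change a * d = c * b at h
    change b * c = d * a
    rw [mul_comm b c, mul_comm d a]; exact h.symm)
  mul_assoc := by
    rintro ⟨⟨a, b⟩⟩ ⟨⟨c, d⟩⟩ ⟨⟨e, f⟩⟩
    exact congrArg (Quotient.mk _) (by dsimp; rw [mul_assoc, mul_assoc])
  one_mul := by
    rintro ⟨⟨a, b⟩⟩
    exact congrArg (Quotient.mk _) (by dsimp; rw [one_mul, one_mul])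
  mul_one := by
    rintro ⟨⟨a, b⟩⟩
    exact congrArg (Quotient.mk _) (by dsimp; rw [mul_one, mul_one])
  mul_comm := by
    rintro ⟨⟨a, b⟩⟩ ⟨⟨c, d⟩⟩
    exact congrArg (Quotient.mk _) (by dsimp; rw [mul_comm a c, mul_comm b d])
  inv_mul_cancel := by
    rintro ⟨⟨a, b⟩⟩
    refine Quotient.sound ?_
    change b * a * 1 = 1 * (a * b)
    rw [mul_one, one_mul, mul_comm]

lemma Gr.mk_mul_mk (a b c d : Q) : Gr.mk a b * Gr.mk c d = Gr.mk (a * c) (b * d) := rfl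

lemma Gr.one_def : (1 : Gr Q) = Gr.mk 1 1 := rfl

lemma Gr.mk_pow (a b : Q) (n : ℕ) : (Gr.mk a b) ^ n = Gr.mk (a ^ n) (b ^ n) := by
  induction n with
  | zero => simp [pow_zero, Gr.one_def]
  | succ n ih => rw [pow_succ, ih, Gr.mk_mul_mk, ← pow_succ, ← pow_succ]

/-- The canonical map into the Grothendieck group. -/
def Gr.of : Q →* Gr Q where
  toFun a := Gr.mk a 1
  map_one' := rfl
  map_mul' a b := by rw [Gr.mk_mul_mk, mul_one]

lemma Gr.of_injective : Function.Injective (Gr.of : Q →* Gr Q) := by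
  intro a b h
  have := Gr.mk_eq_mk.mp h
  rwa [mul_one, mul_one] at this

variable (htf : ∀ (n : ℕ), 0 < n → ∀ x y : Q, x ^ n = y ^ n → x = y)
include htf

lemma Gr.pow_eq_one {g : Gr Q} {n : ℕ} (hn : 0 < n) (h : g ^ n = 1) : g = 1 := by
  obtain ⟨⟨a, b⟩⟩ := g
  have hab : Gr.mk a b ^ n = 1 := h
  rw [Gr.mk_pow, Gr.one_def, Gr.mk_eq_mk, mul_one, one_mul] at hab
  have hab2 : a = b := htf n hn a b hab
  subst hab2
  show Gr.mk a a = 1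
  rw [Gr.one_def, Gr.mk_eq_mk, mul_one, one_mul]

lemma Gr.zpow_eq_one {g : Gr Q} {n : ℤ} (hn : n ≠ 0) (h : g ^ n = 1) : g = 1 := by
  rcases n with m | m
  · have hm : m ≠ 0 := by simpa using hn
    simp only [Int.ofNat_eq_coe, zpow_natCast] at h
    exact Gr.pow_eq_one htf (Nat.pos_of_ne_zero hm) h
  · rw [zpow_negSucc, inv_eq_one] at h
    exact Gr.pow_eq_one htf (Nat.succ_pos m) h

lemma Gr.uniqueSums : UniqueSums (Additive (Gr Q)) := by
  classical
  set M := Additive (Gr Q)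
  let V := LocalizedModule (nonZeroDivisors ℤ) M
  let f : AddHom M V :=
    { toFun := fun x => LocalizedModule.mk x 1
      map_add' := fun x y => by
        rw [LocalizedModule.mk_add_mk]
        simp [one_smul] }
  have hinj : Function.Injective f := by
    intro x y hxy
    change LocalizedModule.mk x 1 = LocalizedModule.mk y 1 at hxy
    obtain ⟨u, hu⟩ := LocalizedModule.mk_eq.mp hxy
    simp only [one_smul, Submonoid.smul_def] at hu
    have hr0 : (u : ℤ) ≠ 0 := nonZeroDivisors.ne_zero u.2
    have hpow : (x - y).toMul ^ (u : ℤ) = 1 := by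
      have h2 : (u : ℤ) • (x - y) = 0 := by
        rw [smul_sub, hu, sub_self]
      have := congrArg Additive.toMul h2
      rwa [toMul_zsmul] at this
    have := Gr.zpow_eq_one htf hr0 hpow
    have hxy2 : x - y = 0 := by
      have : (x - y).toMul = (0 : M).toMul := by simpa using this
      exact Additive.toMul.injective this
    exact sub_eq_zero.mp hxy2
  letI : Module ℚ V := Module.compHom V
    (IsLocalization.algEquiv (nonZeroDivisors ℤ) ℚ (Localization (nonZeroDivisors ℤ))).toRingHom
  exact UniqueSums.of_injective_addHom f hinj inferInstance

lemma Gr.uniqueProds : UniqueProds (Gr Q) := by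
  have h := Gr.uniqueSums htf
  haveI : UniqueSums (Additive (Gr Q)) := h
  exact UniqueProds.of_injective_mulHom
    (MulEquiv.refl (Gr Q)).toMulHom (MulEquiv.refl (Gr Q)).injective
    (inferInstanceAs (UniqueProds (Multiplicative (Additive (Gr Q)))))

lemma uniqueProds_of_cancel_torsionFree : UniqueProds Q :=
  UniqueProds.of_injective_mulHom (Gr.of : Q →* Gr Q).toMulHom Gr.of_injective
    (Gr.uniqueProds htf)

end Grothendieck

section FacePrime

open MonoidAlgebra

variable {A : Type*} [CommRing A] [IsDomain A]
variable {Q : Type*} [CommMonoid Q] [IsCancelMul Q]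
variable (F : Submonoid Q)

/-- The projection monoid hom `Q → A[F]`, killing elements outside a face. -/
noncomputable def faceProj (hface : ∀ x y : Q, x * y ∈ F → x ∈ F ∧ y ∈ F) :
    Q →* MonoidAlgebra A F := by
  classical
  exact
  { toFun := fun q => if h : q ∈ F then MonoidAlgebra.of A F ⟨q, h⟩ else 0
    map_one' := by
      rw [dif_pos F.one_mem]
      exact map_one (MonoidAlgebra.of A F)
    map_mul' := fun x y => by
      by_cases hx : x ∈ F
      · by_cases hy : y ∈ F
        · rw [dif_pos (F.mul_mem hx hy), dif_pos hx, dif_pos hy, ← map_mul]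
          rfl
        · have hxy : x * y ∉ F := fun h => hy (hface x y h).2
          rw [dif_neg hxy, dif_neg hy, mul_zero]
      · have hxy : x * y ∉ F := fun h => hx (hface x y h).1
        rw [dif_neg hxy, dif_neg hx, zero_mul] }

end FacePrime

/-- Let `A` be an integral domain and `Q` a cancellative torsion-free commutative monoid.
For any face `F` of `Q`, the ideal of the monoid algebra `A[Q]` generated by the elements
`e^q` with `q ∉ F` is a prime ideal. -/
theorem monoidAlgebra_face_ideal_isPrime (A : Type*) [CommRing A] [IsDomain A]
    (Q : Type*) [CommMonoid Q] [IsCancelMul Q]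
    (htf : ∀ (n : ℕ), 0 < n → ∀ x y : Q, x ^ n = y ^ n → x = y)
    (F : Submonoid Q) (hface : ∀ x y : Q, x * y ∈ F → x ∈ F ∧ y ∈ F) :
    (Ideal.span ((fun q => MonoidAlgebra.of A Q q) '' {q : Q | q ∉ F})).IsPrime := by
  classical
  haveI hupQ : UniqueProds Q := uniqueProds_of_cancel_torsionFree htf
  haveI hupF : UniqueProds F :=
    UniqueProds.of_injective_mulHom (F.subtype).toMulHom Subtype.coe_injective hupQ
  haveI : IsDomain (MonoidAlgebra A F) := NoZeroDivisors.to_isDomain _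
  set π : MonoidAlgebra A Q →ₐ[A] MonoidAlgebra A F :=
    MonoidAlgebra.lift A (MonoidAlgebra A F) Q (faceProj F hface) with hπ
  have hπ_of : ∀ q : Q, π (MonoidAlgebra.of A Q q) = faceProj F hface q := fun q => by
    rw [hπ, MonoidAlgebra.lift_of]
  -- coefficient computation
  have hcoeff : ∀ (f : MonoidAlgebra A Q) (q : F), (π f).coeff q = f.coeff (q : Q) := by
    intro f q
    induction f using MonoidAlgebra.induction_linear with
    | zero => simp
    | add f g hf hg => rw [map_add, MonoidAlgebra.coeff_add, Finsupp.add_apply, hf, hg, MonoidAlgebra.coeff_add, Finsupp.add_apply]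
    | single q0 a =>
      have hs : π (MonoidAlgebra.single q0 a) = a • faceProj (A := A) F hface q0 := by
        rw [hπ]
        exact MonoidAlgebra.lift_single _ _ _
      rw [hs]
      by_cases h : q0 ∈ F
      · rw [show faceProj (A := A) F hface q0 = MonoidAlgebra.of A F ⟨q0, h⟩ from dif_pos h]
        rw [MonoidAlgebra.of_apply]
        have hiff : (⟨q0, h⟩ : F) = q ↔ q0 = (q : Q) := Subtype.ext_iff
        rw [MonoidAlgebra.coeff_smul, Finsupp.smul_apply, MonoidAlgebra.coeff_single, Finsupp.single_apply,
          MonoidAlgebra.coeff_single, Finsupp.single_apply]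
        split_ifs with h1 h2 h2
        · simp
        · exact absurd (hiff.mp h1) h2
        · exact absurd (hiff.mpr h2) h1
        · simp
      · rw [show faceProj (A := A) F hface q0 = 0 from dif_neg h, smul_zero]
        have hne : q0 ≠ (q : Q) := fun he => h (he ▸ q.2)
        rw [MonoidAlgebra.coeff_single, Finsupp.single_apply, if_neg hne]
        simp
  have hker : Ideal.span ((fun q => MonoidAlgebra.of A Q q) '' {q : Q | q ∉ F})
      = RingHom.ker π := by
    apply le_antisymm
    · rw [Ideal.span_le]
      rintro x ⟨q, hq, rfl⟩
      simp only [SetLike.mem_coe, RingHom.mem_ker]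
      rw [hπ_of]
      exact dif_neg hq
    · intro f hf
      rw [RingHom.mem_ker] at hf
      have hco : ∀ q : Q, q ∈ F → f.coeff q = 0 := by
        intro q hq
        have hc := hcoeff f ⟨q, hq⟩
        rw [hf] at hc
        simpa using hc.symm
      -- rewrite f as sum of singles
      rw [← MonoidAlgebra.sum_coeff_single f, Finsupp.sum]
      apply Submodule.sum_mem
      intro q hq
      rw [Finsupp.mem_support_iff] at hq
      have hqF : q ∉ F := fun h => hq (hco q h)
      have h1 : (MonoidAlgebra.single q (f.coeff q) : MonoidAlgebra A Q)
          = MonoidAlgebra.single (1 : Q) (f.coeff q) * MonoidAlgebra.single q (1 : A) := by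
        rw [MonoidAlgebra.single_mul_single, one_mul, mul_one]
      have h2 : MonoidAlgebra.of A Q q ∈
          Ideal.span ((fun q => MonoidAlgebra.of A Q q) '' {q : Q | q ∉ F}) :=
        Ideal.subset_span ⟨q, hqF, rfl⟩
      rw [MonoidAlgebra.of_apply] at h2
      rw [h1]
      exact Ideal.mul_mem_left _ _ h2
  rw [hker]
  exact RingHom.ker_isPrime _
end

section
/- Let R be a commutative ring, Q a commutative monoid, and α : Q → R a monoid homomorphism into the multiplicative monoid of R. Assume the log ring (R, Q, α) is very solid: for every face G of Q, the ideal of R generated by α(Q∖G) is a prime ideal of R whose α-preimage equals Q∖G. Let 𝔭 be a prime ideal of R and set F = {q ∈ Q : α(q) ∉ 𝔭}. Then for every face G of Q with F ⊆ G, the ideal of the localization R_𝔭 generated by the images of α(Q∖G) is a prime ideal of R_𝔭 whose preimage under the induced map α_𝔭 : Q_F → R_𝔭 equals the set of elements of Q_F not lying in the face of Q_F generated by G; that is, the induced local log ring (R_𝔭, Q_F, α_𝔭) is very solid. -/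
/-- A face of a commutative monoid: a submonoid `F` such that `x * y ∈ F` implies
`x ∈ F` and `y ∈ F`. -/
def Submonoid.IsFace {M : Type*} [CommMonoid M] (F : Submonoid M) : Prop :=
  ∀ x y : M, x * y ∈ F → x ∈ F ∧ y ∈ F

/-- The face generated by a subset `s` of a commutative monoid: the set of elements lying in
every face containing `s`. -/
def faceClosure {M : Type*} [CommMonoid M] (s : Set M) : Set M :=
  {x | ∀ H : Submonoid M, H.IsFace → s ⊆ (H : Set M) → x ∈ H}

private lemma aux_mem_of_mk_eq {Q : Type*} [CommMonoid Q] {F G : Submonoid Q}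
    (hG : G.IsFace) (hFG : F ≤ G) {x a : Q} {f h : F}
    (heq : Localization.mk x f = Localization.mk a h) (ha : a ∈ G) : x ∈ G := by
  rw [Localization.mk_eq_mk_iff, Localization.r_iff_exists] at heq
  obtain ⟨c, hc⟩ := heq
  have hmem : (↑c * (↑h * x) : Q) ∈ G := by
    rw [hc]; exact G.mul_mem (hFG c.2) (G.mul_mem (hFG f.2) ha)
  exact (hG _ _ (hG _ _ hmem).2).2

/-- Let `(R, Q, α)` be a very solid log ring: for every face `G` of `Q`, the ideal of `R`
generated by `α(Q ∖ G)` is prime and its `α`-preimage is `Q ∖ G`. Let `𝔭` be a prime ideal of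
`R`, `F = α⁻¹(R ∖ 𝔭)` (a face of `Q`), and `β : Q_F → R_𝔭` the induced homomorphism on
localizations. Then for every face `G` of `Q` containing `F`, the ideal of `R_𝔭` generated by
the images of `α(Q ∖ G)` is prime and its `β`-preimage is the complement of the face of `Q_F`
generated by (the image of) `G`; i.e. `(R_𝔭, Q_F, β)` is very solid. -/
theorem very_solid_of_localization (R : Type*) [CommRing R] (Q : Type*) [CommMonoid Q]
    (α : Q →* R)
    (hvs : ∀ G : Submonoid Q, G.IsFace →
      (Ideal.span (α '' {q : Q | q ∉ G})).IsPrime ∧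
        ∀ q : Q, α q ∈ Ideal.span (α '' {q : Q | q ∉ G}) ↔ q ∉ G)
    (𝔭 : Ideal R) [𝔭.IsPrime]
    (F : Submonoid Q) (hF : ∀ q : Q, q ∈ F ↔ α q ∉ 𝔭)
    (β : Localization F →* Localization.AtPrime 𝔭)
    (hβ : ∀ (x : Q) (f : F),
      β (Localization.mk x f) * algebraMap R (Localization.AtPrime 𝔭) (α f) =
        algebraMap R (Localization.AtPrime 𝔭) (α x))
    (G : Submonoid Q) (hG : G.IsFace) (hFG : F ≤ G) :
    (Ideal.span (algebraMap R (Localization.AtPrime 𝔭) '' (α '' {q : Q | q ∉ G}))).IsPrime ∧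
      ∀ z : Localization F,
        β z ∈ Ideal.span (algebraMap R (Localization.AtPrime 𝔭) '' (α '' {q : Q | q ∉ G})) ↔
          z ∉ faceClosure ((fun q => Localization.mk q (1 : F)) '' (G : Set Q)) := by
  obtain ⟨h𝔮prime, h𝔮mem⟩ := hvs G hG
  set 𝔮 : Ideal R := Ideal.span (α '' {q : Q | q ∉ G}) with h𝔮
  have hQP : 𝔮 ≤ 𝔭 := by
    rw [h𝔮, Ideal.span_le]
    rintro _ ⟨q, hq, rfl⟩
    by_contra h
    exact hq (hFG ((hF q).mpr h))
  have hdisj : Disjoint (↑𝔭.primeCompl : Set R) (𝔮 : Set R) := by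
    rw [Set.disjoint_left]
    exact fun a ha ha' => ha (hQP ha')
  have hmapspan : Ideal.span (algebraMap R (Localization.AtPrime 𝔭) '' (α '' {q : Q | q ∉ G}))
      = 𝔮.map (algebraMap R (Localization.AtPrime 𝔭)) := by
    rw [h𝔮, Ideal.map_span]
  have hprime := IsLocalization.isPrime_of_isPrime_disjoint 𝔭.primeCompl
    (Localization.AtPrime 𝔭) 𝔮 h𝔮prime hdisj
  have hcomap := IsLocalization.comap_map_of_isPrime_disjoint 𝔭.primeCompl
    (Localization.AtPrime 𝔭) (I := 𝔮) h𝔮prime hdisj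
  rw [hmapspan]
  refine ⟨hprime, fun z => ?_⟩
  -- the face H in the localization
  have Hface : ∃ H : Submonoid (Localization F), H.IsFace ∧
      (H : Set (Localization F)) = {z | ∃ a ∈ G, ∃ h : F, z = Localization.mk a h} := by
    refine ⟨⟨⟨{z | ∃ a ∈ G, ∃ h : F, z = Localization.mk a h}, ?_⟩, ?_⟩, ?_, rfl⟩
    · rintro u v ⟨a, ha, f, rfl⟩ ⟨b, hb, g, rfl⟩
      exact ⟨a * b, G.mul_mem ha hb, f * g, Localization.mk_mul a b f g⟩
    · exact ⟨1, G.one_mem, 1, (Localization.mk_self (1 : F)).symm⟩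
    · rintro u v ⟨a, ha, f, heq⟩
      obtain ⟨x, f', rfl⟩ : ∃ (x : Q) (f' : F), u = Localization.mk x f' := by
        exact Localization.induction_on u fun ⟨x, f'⟩ => ⟨x, f', rfl⟩
      obtain ⟨y, g', rfl⟩ : ∃ (y : Q) (g' : F), v = Localization.mk y g' := by
        exact Localization.induction_on v fun ⟨y, g'⟩ => ⟨y, g', rfl⟩
      rw [Localization.mk_mul] at heq
      have hxy : x * y ∈ G := aux_mem_of_mk_eq hG hFG heq ha
      exact ⟨⟨x, (hG _ _ hxy).1, f', rfl⟩, ⟨y, (hG _ _ hxy).2, g', rfl⟩⟩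
  obtain ⟨H, hHface, hHcarrier⟩ := Hface
  obtain ⟨x, f, rfl⟩ : ∃ (x : Q) (f : F), z = Localization.mk x f := by
    exact Localization.induction_on z fun ⟨x, f⟩ => ⟨x, f, rfl⟩
  -- faceClosure characterization
  have hclos : Localization.mk x f ∈
      faceClosure ((fun q => Localization.mk q (1 : F)) '' (G : Set Q)) ↔ x ∈ G := by
    constructor
    · intro hz
      have := hz H hHface (by
        rintro _ ⟨a, ha, rfl⟩
        show _ ∈ (H : Set (Localization F))
        rw [hHcarrier]
        exact ⟨a, ha, 1, rfl⟩)
      rw [← SetLike.mem_coe, hHcarrier] at this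
      obtain ⟨a, ha, h, heq⟩ := this
      exact aux_mem_of_mk_eq hG hFG heq ha
    · intro hx K hKface hKs
      have hx1 : Localization.mk x (1 : F) ∈ K := hKs ⟨x, hx, rfl⟩
      have hf1 : Localization.mk (f : Q) (1 : F) ∈ K := hKs ⟨f, hFG f.2, rfl⟩
      have h1f : Localization.mk 1 f ∈ K := by
        have : Localization.mk 1 f * Localization.mk (f : Q) (1 : F) ∈ K := by
          rw [Localization.mk_mul, one_mul, mul_one]
          exact (Localization.mk_self f) ▸ K.one_mem
        exact (hKface _ _ this).1
      have : Localization.mk x (1 : F) * Localization.mk 1 f ∈ K := K.mul_mem hx1 h1f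
      rwa [Localization.mk_mul, mul_one, one_mul] at this
  rw [hclos]
  -- unit trick
  have hfu : IsUnit (algebraMap R (Localization.AtPrime 𝔭) (α f)) :=
    IsLocalization.map_units (Localization.AtPrime 𝔭)
      (⟨α f, (hF f).mp f.2⟩ : 𝔭.primeCompl)
  have hmul : β (Localization.mk x f) ∈ 𝔮.map (algebraMap R (Localization.AtPrime 𝔭)) ↔
      algebraMap R (Localization.AtPrime 𝔭) (α x) ∈
        𝔮.map (algebraMap R (Localization.AtPrime 𝔭)) := by
    rw [← hβ x f, Ideal.mul_unit_mem_iff_mem _ hfu]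
  rw [hmul]
  have : algebraMap R (Localization.AtPrime 𝔭) (α x) ∈
      𝔮.map (algebraMap R (Localization.AtPrime 𝔭)) ↔ α x ∈ 𝔮 := by
    constructor
    · intro h; rw [← hcomap]; exact h
    · intro h; exact Ideal.mem_map_of_mem _ h
  rw [this, h𝔮mem x]
end

section
/- Let A be an integral domain and let Q be a cancellative, torsion-free commutative monoid. Let R = A[Q] be the monoid algebra, let 𝔭 be a prime ideal of R, and let F = {q ∈ Q : e^q ∉ 𝔭}, a face of Q. Then for every face G of Q with F ⊆ G, the ideal of the localization R_𝔭 generated by the images of the elements e^q with q ∈ Q∖G is a prime ideal of R_𝔭. -/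
theorem aux_uniqueProds {Q : Type*} [CommMonoid Q] [IsCancelMul Q]
    (htf : ∀ (n : ℕ), 0 < n → ∀ x y : Q, x ^ n = y ^ n → x = y) : UniqueProds Q := by
  classical
  set S : Submonoid Q := ⊤ with hS
  -- the localization at ⊤ is torsion-free
  have hL : ∀ (n : ℕ), 0 < n → ∀ x y : Localization S, x ^ n = y ^ n → x = y := by
    intro n hn x y
    refine Localization.induction_on₂ x y ?_
    rintro ⟨a, s⟩ ⟨b, t⟩ h
    rw [Localization.mk_pow, Localization.mk_pow, Localization.mk_eq_mk_iff,
      Localization.r_iff_exists] at h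
    obtain ⟨c, hc⟩ := h
    have h2 : ((t : Q) * a) ^ n = ((s : Q) * b) ^ n := by
      have := mul_left_cancel hc
      simpa [mul_pow, SubmonoidClass.coe_pow] using this
    have h3 := htf n hn _ _ h2
    rw [Localization.mk_eq_mk_iff, Localization.r_iff_exists]
    exact ⟨1, by simpa using h3⟩
  -- the embedding into the units of the localization
  let φ : Q →* (Localization S)ˣ :=
  { toFun := fun q => ⟨Localization.mk q 1, Localization.mk 1 ⟨q, Submonoid.mem_top q⟩,
      by rw [Localization.mk_mul, mul_one, one_mul]; exact Localization.mk_self ⟨q, Submonoid.mem_top q⟩,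
      by rw [Localization.mk_mul, mul_one, one_mul]; exact Localization.mk_self ⟨q, Submonoid.mem_top q⟩⟩
    map_one' := Units.ext (by simpa using Localization.mk_one)
    map_mul' := fun a b => Units.ext (by
      show Localization.mk (a * b) 1 = Localization.mk a 1 * Localization.mk b 1
      rw [Localization.mk_mul, one_mul]) }
  have hφinj : Function.Injective φ := by
    intro a b hab
    have h1 : Localization.mk a (1 : S) = Localization.mk b 1 := congrArg Units.val hab
    rw [Localization.mk_eq_mk_iff, Localization.r_iff_exists] at h1
    obtain ⟨c, hc⟩ := h1
    have := mul_left_cancel hc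
    simpa using this
  -- the units group is torsion-free
  have hu : ∀ (u : (Localization S)ˣ) (z : ℤ), z ≠ 0 → u ^ z = 1 → u = 1 := by
    intro u z hz h1
    have key : ∀ m : ℕ, 0 < m → u ^ m = 1 → u = 1 := by
      intro m hm hum
      refine Units.ext (hL m hm u 1 ?_)
      rw [← Units.val_pow_eq_pow_val, hum, one_pow, Units.val_one]
    rcases z with n | n
    · rw [Int.ofNat_eq_coe] at hz h1
      have hn : 0 < n := by omega
      rw [zpow_natCast] at h1
      exact key n hn h1
    · rw [zpow_negSucc, inv_eq_one] at h1
      exact key (n + 1) (Nat.succ_pos n) h1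
  letI M := Additive (Localization S)ˣ
  haveI : NoZeroSMulDivisors ℤ M := by
    constructor
    intro z x h
    rw [or_iff_not_imp_left]
    intro hz
    have : x.toMul ^ z = 1 := by
      rw [← toMul_zsmul, h]; rfl
    have := hu x.toMul z hz this
    exact this
  letI V := LocalizedModule (nonZeroDivisors ℤ) M
  have hinjV : Function.Injective (LocalizedModule.mkLinearMap (nonZeroDivisors ℤ) M) := by
    intro m m' h
    simp only [LocalizedModule.mkLinearMap_apply] at h
    rw [LocalizedModule.mk_eq] at h
    obtain ⟨u, hu'⟩ := h
    simp only [one_smul] at hu'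
    have hz : (u : ℤ) ≠ 0 := nonZeroDivisors.coe_ne_zero u
    have : (u : ℤ) • m = (u : ℤ) • m' := by
      exact hu'
    exact smul_right_injective M hz this
  haveI : TwoUniqueSums V := by
    letI : Module ℚ V := LocalizedModule.moduleOfIsLocalization (S := nonZeroDivisors ℤ) (T := ℚ) (M := M)
    infer_instance
  let f : Q →ₙ* Multiplicative V :=
  { toFun := fun q =>
      Multiplicative.ofAdd (LocalizedModule.mkLinearMap (nonZeroDivisors ℤ) M
        (Additive.ofMul (φ q)))
    map_mul' := fun a b => by
      simp only [map_mul, ofMul_mul, map_add, ofAdd_add] }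
  have hfinj : Function.Injective f := by
    intro a b hab
    apply hφinj
    apply Additive.ofMul.injective
    apply hinjV
    exact Multiplicative.ofAdd.injective hab
  exact UniqueProds.of_injective_mulHom f hfinj inferInstance

/-- Let `A` be an integral domain, `Q` a cancellative torsion-free commutative monoid,
`R = A[Q]` the monoid algebra, `𝔭` a prime ideal of `R`, and `F = {q : e^q ∉ 𝔭}` (a face of
`Q`). Then for every face `G` of `Q` containing `F`, the ideal of the localization `R_𝔭`
generated by the images of the elements `e^q` with `q ∉ G` is a prime ideal of `R_𝔭`. -/
theorem monoidAlgebra_localization_face_ideal_isPrime (A : Type*) [CommRing A] [IsDomain A]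
    (Q : Type*) [CommMonoid Q] [IsCancelMul Q]
    (htf : ∀ (n : ℕ), 0 < n → ∀ x y : Q, x ^ n = y ^ n → x = y)
    (𝔭 : Ideal (MonoidAlgebra A Q)) [𝔭.IsPrime]
    (G : Submonoid Q) (hG : ∀ x y : Q, x * y ∈ G → x ∈ G ∧ y ∈ G)
    (hFG : ∀ q : Q, MonoidAlgebra.of A Q q ∉ 𝔭 → q ∈ G) :
    (Ideal.span (algebraMap (MonoidAlgebra A Q) (Localization.AtPrime 𝔭) ''
        ((fun q => MonoidAlgebra.of A Q q) '' {q : Q | q ∉ G}))).IsPrime := by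
  classical
  haveI : UniqueProds Q := aux_uniqueProds htf
  -- the ideal of elements supported outside `G`
  let J : Ideal (MonoidAlgebra A Q) :=
  { carrier := {f | ∀ q ∈ G, f.coeff q = 0}
    zero_mem' := fun q _ => rfl
    add_mem' := by
      intro f g hf hg q hq
      show (f + g).coeff q = 0
      rw [MonoidAlgebra.coeff_add, Finsupp.add_apply, hf q hq, hg q hq, add_zero]
    smul_mem' := by
      intro c f hf q hq
      rw [smul_eq_mul, MonoidAlgebra.coeff_mul]
      refine Finset.sum_eq_zero ?_
      intro a _
      refine Finset.sum_eq_zero ?_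
      intro b _
      dsimp only
      split_ifs with h
      · rw [hf b (hG a b (h ▸ hq)).2, mul_zero]
      · rfl }
  have hJmem : ∀ f : MonoidAlgebra A Q, f ∈ J ↔ ∀ q ∈ G, f.coeff q = 0 := fun _ => Iff.rfl
  -- the span equals `J`
  have hspan : Ideal.span ((fun q => MonoidAlgebra.of A Q q) '' {q : Q | q ∉ G}) = J := by
    apply le_antisymm
    · rw [Ideal.span_le]
      rintro _ ⟨q, hq, rfl⟩
      intro q' hq'
      exact Finsupp.single_eq_of_ne' (fun h => hq (h ▸ hq'))
    · intro f hf
      have key : f.coeff.sum (fun q a => (MonoidAlgebra.single q a : MonoidAlgebra A Q)) ∈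
          Ideal.span ((fun q => MonoidAlgebra.of A Q q) '' {q : Q | q ∉ G}) := by
        refine Submodule.sum_mem _ ?_
        intro q hmem
        have hqG : q ∉ G := fun hq => (Finsupp.mem_support_iff.mp hmem) (hf q hq)
        dsimp only
        have : (MonoidAlgebra.single q (f.coeff q) : MonoidAlgebra A Q) =
            MonoidAlgebra.single (1 : Q) (f.coeff q) * MonoidAlgebra.of A Q q := by
          rw [MonoidAlgebra.of_apply, MonoidAlgebra.single_mul_single, one_mul, mul_one]
        rw [this]
        exact Ideal.mul_mem_left _ _ (Ideal.subset_span ⟨q, hqG, rfl⟩)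
      rwa [MonoidAlgebra.sum_coeff_single f] at key
  -- `J` is prime
  have hJprime : J.IsPrime := by
    constructor
    · intro h
      have h1 : (1 : MonoidAlgebra A Q) ∈ J := h ▸ Submodule.mem_top
      have := h1 1 G.one_mem
      rw [MonoidAlgebra.coeff_one_one] at this
      exact one_ne_zero this
    · intro f g hfg
      by_contra hc
      push_neg at hc
      obtain ⟨hf, hg⟩ := hc
      set f₁ : MonoidAlgebra A Q := MonoidAlgebra.ofCoeff (f.coeff.filter (· ∈ G)) with hf₁def
      set f₂ : MonoidAlgebra A Q := MonoidAlgebra.ofCoeff (f.coeff.filter (fun q => ¬ q ∈ G)) with hf₂def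
      set g₁ : MonoidAlgebra A Q := MonoidAlgebra.ofCoeff (g.coeff.filter (· ∈ G)) with hg₁def
      set g₂ : MonoidAlgebra A Q := MonoidAlgebra.ofCoeff (g.coeff.filter (fun q => ¬ q ∈ G)) with hg₂def
      have hfsum : f₁ + f₂ = f := MonoidAlgebra.ext (Finsupp.filter_pos_add_filter_neg f.coeff _)
      have hgsum : g₁ + g₂ = g := MonoidAlgebra.ext (Finsupp.filter_pos_add_filter_neg g.coeff _)
      have hf₂J : f₂ ∈ J := fun q hq => Finsupp.filter_apply_neg _ f.coeff (not_not_intro hq)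
      have hg₂J : g₂ ∈ J := fun q hq => Finsupp.filter_apply_neg _ g.coeff (not_not_intro hq)
      have hf₁ne : f₁ ≠ 0 := by
        intro h0
        apply hf
        have : f = f₂ := by rw [← hfsum, h0, zero_add]
        rw [this]; exact hf₂J
      have hg₁ne : g₁ ≠ 0 := by
        intro h0
        apply hg
        have : g = g₂ := by rw [← hgsum, h0, zero_add]
        rw [this]; exact hg₂J
      have hmulne : f₁ * g₁ ≠ 0 := mul_ne_zero hf₁ne hg₁ne
      -- f₁ * g₁ ∈ J
      have hJ11 : f₁ * g₁ ∈ J := by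
        have heq : f₁ * g₁ = f * g - f₁ * g₂ - f₂ * g := by
          rw [← hfsum, ← hgsum]; ring
        rw [heq]
        exact sub_mem (sub_mem hfg (Ideal.mul_mem_left J f₁ hg₂J))
          (Ideal.mul_mem_right g J hf₂J)
      -- but its support lies in G
      obtain ⟨q, hq⟩ := Finsupp.support_nonempty_iff.mpr (MonoidAlgebra.coeff_eq_zero.not.mpr hmulne)
      have hqG : q ∈ G := by
        have := MonoidAlgebra.support_coeff_mul_subset f₁ g₁ hq
        rw [Finset.mem_mul] at this
        obtain ⟨a, ha, b, hb, rfl⟩ := this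
        have haG : a ∈ G := by
          rw [hf₁def, MonoidAlgebra.coeff_ofCoeff, Finsupp.support_filter, Finset.mem_filter] at ha
          exact ha.2
        have hbG : b ∈ G := by
          rw [hg₁def, MonoidAlgebra.coeff_ofCoeff, Finsupp.support_filter, Finset.mem_filter] at hb
          exact hb.2
        exact G.mul_mem haG hbG
      exact Finsupp.mem_support_iff.mp hq (hJ11 q hqG)
  -- conclude by localization
  have hle : Ideal.span ((fun q => MonoidAlgebra.of A Q q) '' {q : Q | q ∉ G}) ≤ 𝔭 := by
    rw [Ideal.span_le]
    rintro _ ⟨q, hq, rfl⟩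
    by_contra h
    exact hq (hFG q h)
  rw [← Ideal.map_span]
  refine IsLocalization.isPrime_of_isPrime_disjoint 𝔭.primeCompl _ _ (hspan ▸ hJprime) ?_
  rw [Set.disjoint_left]
  intro x hx hx'
  exact hx (hle hx')
end

section
/- Let M be a cancellative, root closed commutative monoid. Then the associated reduced monoid M_red (the quotient of M by the congruence identifying associates; in Mathlib terms, Associates M) is cancellative and root closed: whenever classes a, b ∈ M_red and n > 0 satisfy n•a = n•b + q for some q ∈ M_red, there exists q' ∈ M_red with a = b + q'. -/
/-- Let `M` be a cancellative, root closed commutative monoid. Then the associated reduced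
monoid `M_red = Associates M` (the quotient of `M` by the congruence identifying associates)
is cancellative and root closed: whenever `a ^ n = b ^ n * q` for classes `a, b, q` and `n > 0`,
there exists `q'` with `a = b * q'`. -/
theorem associates_rootClosed_of_rootClosed (M : Type*) [CommMonoid M] [IsCancelMul M]
    (hrc : ∀ (a b : M) (n : ℕ), 0 < n → (∃ q : M, a ^ n = b ^ n * q) → ∃ q' : M, a = b * q') :
    IsCancelMul (Associates M) ∧
      ∀ (a b : Associates M) (n : ℕ), 0 < n →
        (∃ q : Associates M, a ^ n = b ^ n * q) → ∃ q' : Associates M, a = b * q' := by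
  have cancel : ∀ a b c : Associates M, a * b = a * c → b = c := by
    intro a b c h
    obtain ⟨a, rfl⟩ := Associates.mk_surjective a
    obtain ⟨b, rfl⟩ := Associates.mk_surjective b
    obtain ⟨c, rfl⟩ := Associates.mk_surjective c
    rw [Associates.mk_mul_mk, Associates.mk_mul_mk, Associates.mk_eq_mk_iff_associated] at h
    obtain ⟨u, hu⟩ := h
    rw [Associates.mk_eq_mk_iff_associated]
    refine ⟨u, mul_left_cancel (a := a) ?_⟩
    rw [← mul_assoc, hu]
  constructor
  · exact { mul_left_cancel := cancel,
            mul_right_cancel := fun a b c h =>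
              cancel a b c (by rw [mul_comm a b, mul_comm a c]; exact h) }
  · intro a b n hn ⟨q, hq⟩
    obtain ⟨a, rfl⟩ := Associates.mk_surjective a
    obtain ⟨b, rfl⟩ := Associates.mk_surjective b
    obtain ⟨q, rfl⟩ := Associates.mk_surjective q
    rw [← Associates.mk_pow, ← Associates.mk_pow, Associates.mk_mul_mk,
        Associates.mk_eq_mk_iff_associated] at hq
    obtain ⟨u, hu⟩ := hq
    obtain ⟨q', hq'⟩ := hrc a b n hn ⟨q * ↑u⁻¹, by rw [← mul_assoc, ← hu, mul_assoc, Units.mul_inv, mul_one]⟩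
    exact ⟨Associates.mk q', by rw [Associates.mk_mul_mk, hq']⟩
end
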